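/- For every p ∈ ℕ with p ≥ 1, the sequence P^p → RT^p → P^{p−1} with maps curl(u) = (∂u/∂x₂, −∂u/∂x₁) and div is exact at RT^p: the kernel of div restricted to RT^p equals the image of curl on P^p. -/

import Mathlib

open MvPolynomial

noncomputable section Stmt8Aux

abbrev R2 := MvPolynomial (Fin 2) ℝ

def es (i : Fin 2) : Fin 2 →₀ ℕ := Finsupp.single i 1

lemma finsum_eq (m : Fin 2 →₀ ℕ) : ∑ i ∈ m.support, m i = m 0 + m 1 := by
  have : (m.sum fun _ e => e) = m 0 + m 1 := by
    rw [Finsupp.sum_fintype _ _ (fun _ => rfl)]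
    exact Fin.sum_univ_two _
  exact this

lemma es_sum (m : Fin 2 →₀ ℕ) (i : Fin 2) :
    (m + es i) 0 + (m + es i) 1 = m 0 + m 1 + 1 := by
  rcases i with ⟨iv, hi⟩
  interval_cases iv <;>
    simp [es, Finsupp.add_apply, Finsupp.single_apply] <;> ring

lemma coeff_pderiv (i : Fin 2) (f : R2) (m : Fin 2 →₀ ℕ) :
    coeff m (pderiv i f) = ((m i : ℝ) + 1) * coeff (m + es i) f := by
  induction f using MvPolynomial.induction_on' with
  | add f g hf hg => simp [hf, hg, mul_add]
  | monomial s a =>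
    rw [pderiv_monomial, coeff_monomial, coeff_monomial]
    by_cases hc : s = m + es i
    · have hsm : s - Finsupp.single i 1 = m := by
        rw [hc]; exact add_tsub_cancel_right _ _
      have hsi : s i = m i + 1 := by
        rw [hc]; simp [es, Finsupp.add_apply, Finsupp.single_apply]
      rw [if_pos hsm, if_pos hc, hsi]
      push_cast; ring
    · rw [if_neg hc, mul_zero]
      by_cases hsm : s - Finsupp.single i 1 = m
      · rw [if_pos hsm]
        rcases Nat.eq_zero_or_pos (s i) with h0 | h0
        · rw [h0]; simp
        · exfalso; apply hc
          have hle : Finsupp.single i 1 ≤ s := by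
            rw [Finsupp.single_le_iff]; omega
          rw [← hsm, es, tsub_add_cancel_of_le hle]
      · rw [if_neg hsm]

lemma es_apply_ne (i j : Fin 2) (h : i ≠ j) (m : Fin 2 →₀ ℕ) : (m + es i) j = m j := by
  simp [es, Finsupp.add_apply, Finsupp.single_apply, h]

lemma es_apply (i : Fin 2) (m : Fin 2 →₀ ℕ) : (m + es i) i = m i + 1 := by
  simp [es, Finsupp.add_apply, Finsupp.single_apply]

lemma pderiv_comm01 (f : R2) :
    pderiv (0 : Fin 2) (pderiv (1 : Fin 2) f) = pderiv (1 : Fin 2) (pderiv (0 : Fin 2) f) := by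
  ext m
  rw [coeff_pderiv, coeff_pderiv, coeff_pderiv, coeff_pderiv,
    es_apply_ne 0 1 (by decide), es_apply_ne 1 0 (by decide), add_right_comm]
  ring

/-- Formal antiderivative in variable `i`. -/
def antideriv (i : Fin 2) (q : R2) : R2 :=
  ∑ m ∈ q.support, monomial (m + es i) (coeff m q / (m i + 1))

lemma coeff_antideriv_add (i : Fin 2) (q : R2) (m : Fin 2 →₀ ℕ) :
    coeff (m + es i) (antideriv i q) = coeff m q / ((m i : ℝ) + 1) := by
  classical
  rw [antideriv, coeff_sum]
  simp only [coeff_monomial, add_left_inj]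
  simp only [Finset.sum_ite_eq']
  by_cases hm : m ∈ q.support
  · simp only [if_pos hm]
  · simp only [if_neg hm]
    have hz : coeff m q = 0 := MvPolynomial.notMem_support_iff.mp hm
    rw [hz, zero_div]

lemma pderiv_antideriv (i : Fin 2) (q : R2) : pderiv i (antideriv i q) = q := by
  ext m
  rw [coeff_pderiv, coeff_antideriv_add]
  have : ((m i : ℝ) + 1) ≠ 0 := by positivity
  field_simp

lemma totalDegree_antideriv_le (i : Fin 2) (q : R2) {d : ℕ} (hq : q.totalDegree ≤ d) :
    (antideriv i q).totalDegree ≤ d + 1 := by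
  rw [antideriv]
  apply totalDegree_finsetSum_le
  intro m hm
  refine (totalDegree_monomial_le _ _).trans ?_
  show (∑ j ∈ (m + es i).support, (m + es i) j) ≤ d + 1
  rw [finsum_eq, es_sum]
  have h1 : m 0 + m 1 ≤ d := by
    have h2 := le_totalDegree (p := q) hm
    have h3 : (m.sum fun _ e => e) = m 0 + m 1 := finsum_eq m
    rw [show (m.sum fun _ e => e) = ∑ j ∈ m.support, m j from rfl, finsum_eq] at h2
    omega
  omega

lemma totalDegree_le_of_coeff (f : R2) (d : ℕ)
    (h : ∀ m : Fin 2 →₀ ℕ, coeff m f ≠ 0 → m 0 + m 1 ≤ d) : f.totalDegree ≤ d := by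
  refine Finset.sup_le fun m hm => ?_
  show (∑ j ∈ m.support, m j) ≤ d
  rw [finsum_eq]
  exact h m (MvPolynomial.mem_support_iff.mp hm)

lemma coeff_zero_of_totalDegree_le {f : R2} {d : ℕ} (hf : f.totalDegree ≤ d)
    {m : Fin 2 →₀ ℕ} (hm : d < m 0 + m 1) : coeff m f = 0 := by
  apply coeff_eq_zero_of_totalDegree_lt
  rw [finsum_eq]
  omega

lemma totalDegree_pderiv_le (i : Fin 2) (f : R2) {d : ℕ} (hf : f.totalDegree ≤ d + 1) :
    (pderiv i f).totalDegree ≤ d := by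
  apply totalDegree_le_of_coeff
  intro m hm
  by_contra hd
  push_neg at hd
  apply hm
  rw [coeff_pderiv]
  have h2 := es_sum m i
  rw [coeff_zero_of_totalDegree_le hf (by omega), mul_zero]

lemma pderiv_one_antideriv_zero (h : R2) (hh : pderiv (1 : Fin 2) h = 0) :
    pderiv (1 : Fin 2) (antideriv 0 h) = 0 := by
  classical
  have key : ∀ n : Fin 2 →₀ ℕ, n 1 ≠ 0 → coeff n h = 0 := by
    intro n hn
    have h2 := congrArg (coeff (n - es 1)) hh
    rw [coeff_pderiv] at h2
    have hle : Finsupp.single (1 : Fin 2) 1 ≤ n := by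
      rw [Finsupp.single_le_iff]; omega
    rw [show n - es 1 + es 1 = n from tsub_add_cancel_of_le hle, coeff_zero] at h2
    have hne : (((n - es 1) 1 : ℝ) + 1) ≠ 0 := by positivity
    exact (mul_eq_zero.mp h2).resolve_left hne
  ext m
  rw [coeff_pderiv, coeff_zero]
  have hz : coeff (m + es 1) (antideriv 0 h) = 0 := by
    rw [antideriv, coeff_sum]
    apply Finset.sum_eq_zero
    intro n hn
    rw [coeff_monomial, if_neg]
    intro hc
    have h1 : n 1 = 0 := by
      by_contra hne
      exact (MvPolynomial.mem_support_iff.mp hn) (key n hne)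
    have h3 := congrFun (congrArg (fun f : Fin 2 →₀ ℕ => (f : Fin 2 → ℕ)) hc) 1
    rw [show ((n + es 0) : Fin 2 →₀ ℕ) 1 = n 1 from es_apply_ne 0 1 (by decide) n,
      es_apply 1 m] at h3
    omega
  rw [hz, mul_zero]

lemma es_sub_sum (n : Fin 2 →₀ ℕ) (i : Fin 2) (h : n i ≠ 0) :
    (n - es i) 0 + (n - es i) 1 + 1 = n 0 + n 1 := by
  have h0 := Finsupp.tsub_apply n (es i) 0
  have h1 := Finsupp.tsub_apply n (es i) 1
  rcases i with ⟨iv, hi⟩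
  interval_cases iv <;>
    simp only [Fin.mk_zero, Fin.mk_one, es, Finsupp.single_apply] at h0 h1 h ⊢ <;>
    simp only [show ((0:Fin 2) = 1) = False by simp, show ((1:Fin 2) = 0) = False by simp,
      if_true, if_false, eq_self_iff_true] at h0 h1 <;>
    omega

end Stmt8Aux

/-- Membership in the 2D Raviart–Thomas space `RT^p = (P^{p-1})² + x·P^{p-1}`,
expressed componentwise. -/
def MemRT (p : ℕ) (τ₁ τ₂ : MvPolynomial (Fin 2) ℝ) : Prop :=
  ∃ a₁ a₂ g : MvPolynomial (Fin 2) ℝ,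
    a₁.totalDegree ≤ p - 1 ∧ a₂.totalDegree ≤ p - 1 ∧ g.totalDegree ≤ p - 1 ∧
    τ₁ = a₁ + X 0 * g ∧ τ₂ = a₂ + X 1 * g

/-- Exactness of `P^p → RT^p → P^{p-1}` at `RT^p`: for `τ ∈ RT^p`,
`div τ = 0` iff `τ = curl u = (∂₂u, −∂₁u)` for some `u ∈ P^p`. -/
theorem stmt8 (p : ℕ) (hp : 1 ≤ p) (τ₁ τ₂ : MvPolynomial (Fin 2) ℝ)
    (hτ : MemRT p τ₁ τ₂) :
    pderiv (0 : Fin 2) τ₁ + pderiv (1 : Fin 2) τ₂ = 0 ↔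
      ∃ u : MvPolynomial (Fin 2) ℝ, u.totalDegree ≤ p ∧
        τ₁ = pderiv (1 : Fin 2) u ∧ τ₂ = -pderiv (0 : Fin 2) u := by
  obtain ⟨a₁, a₂, g, ha₁, ha₂, hg, ht₁, ht₂⟩ := hτ
  constructor
  · intro hdiv
    -- Step A: the coefficients of `g` in total degree `≥ p - 1` vanish.
    have gkey : ∀ m : Fin 2 →₀ ℕ, p - 1 ≤ m 0 + m 1 → coeff m g = 0 := by
      intro m hm
      have h0 : coeff m (pderiv (0 : Fin 2) (a₁ + X 0 * g))
          + coeff m (pderiv (1 : Fin 2) (a₂ + X 1 * g)) = 0 := by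
        rw [← ht₁, ← ht₂, ← coeff_add, hdiv, coeff_zero]
      have hXg0 : coeff (m + es 0) (X (0 : Fin 2) * g) = coeff m g := by
        rw [show m + es 0 = Finsupp.single (0 : Fin 2) 1 + m from add_comm _ _]
        exact coeff_X_mul m 0 g
      have hXg1 : coeff (m + es 1) (X (1 : Fin 2) * g) = coeff m g := by
        rw [show m + es 1 = Finsupp.single (1 : Fin 2) 1 + m from add_comm _ _]
        exact coeff_X_mul m 1 g
      have hs0 := es_sum m 0
      have hs1 := es_sum m 1
      have hA1 : coeff (m + es 0) a₁ = 0 :=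
        coeff_zero_of_totalDegree_le ha₁ (by omega)
      have hA2 : coeff (m + es 1) a₂ = 0 :=
        coeff_zero_of_totalDegree_le ha₂ (by omega)
      rw [map_add, map_add, coeff_add, coeff_add, coeff_pderiv, coeff_pderiv,
        coeff_pderiv, coeff_pderiv, hA1, hA2, hXg0, hXg1] at h0
      have hfac : ((m 0 : ℝ) + 1) + ((m 1 : ℝ) + 1) ≠ 0 := by positivity
      have : (((m 0 : ℝ) + 1) + ((m 1 : ℝ) + 1)) * coeff m g = 0 := by
        linear_combination h0
      exact (mul_eq_zero.mp this).resolve_left hfac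
    -- Step A2: hence both components of τ have total degree ≤ p - 1.
    have hXg_deg : ∀ (i : Fin 2) (a : MvPolynomial (Fin 2) ℝ), a.totalDegree ≤ p - 1 →
        totalDegree (a + X i * g) ≤ p - 1 := by
      intro i a ha
      apply totalDegree_le_of_coeff
      intro n hn
      by_contra hdn
      push_neg at hdn
      apply hn
      rw [coeff_add, coeff_zero_of_totalDegree_le ha (by omega), zero_add, coeff_X_mul']
      rw [show n - Finsupp.single i 1 = n - es i from rfl]
      split_ifs with hi
      · apply gkey
        have hni : n i ≠ 0 := Finsupp.mem_support_iff.mp hi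
        have := es_sub_sum n i hni
        omega
      · rfl
    have hd₁ : τ₁.totalDegree ≤ p - 1 := by rw [ht₁]; exact hXg_deg 0 a₁ ha₁
    have hd₂ : τ₂.totalDegree ≤ p - 1 := by rw [ht₂]; exact hXg_deg 1 a₂ ha₂
    -- Step B: construct the potential.
    set u₀ := antideriv 1 τ₁ with hu₀def
    have hu₀ : pderiv (1 : Fin 2) u₀ = τ₁ := pderiv_antideriv _ _
    set h := pderiv (0 : Fin 2) u₀ + τ₂ with hdef
    have hh : pderiv (1 : Fin 2) h = 0 := by
      rw [hdef, map_add, ← pderiv_comm01, hu₀, hdiv]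
    have hpe : p - 1 + 1 = p := Nat.sub_add_cancel hp
    have du0 : u₀.totalDegree ≤ (p - 1) + 1 := totalDegree_antideriv_le _ _ hd₁
    have dh : h.totalDegree ≤ p - 1 :=
      (totalDegree_add _ _).trans (max_le (totalDegree_pderiv_le 0 u₀ du0) hd₂)
    have dA : (antideriv 0 h).totalDegree ≤ (p - 1) + 1 := totalDegree_antideriv_le _ _ dh
    refine ⟨u₀ - antideriv 0 h, ?_, ?_, ?_⟩
    · refine (totalDegree_sub _ _).trans ?_
      rw [hpe] at du0 dA
      exact max_le du0 dA
    · rw [map_sub, hu₀, pderiv_one_antideriv_zero h hh, sub_zero]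
    · rw [map_sub, pderiv_antideriv, hdef]
      ring
  · rintro ⟨u, hu, h1, h2⟩
    rw [h1, h2, map_neg, pderiv_comm01]
    ring
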